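/- If K(x) is a continuous function on ℝ satisfying limsup_{x→+∞} |K(x)|·√x < 1 (in particular |K(x)| < x^{−1/2} for all sufficiently large x > 0), then the solution of the scalar ODE ẋ = −x + (K(x)+1)² x² with initial condition x(0) = 4 blows up or is unbounded; in particular, there is no continuous feedback K rendering ẋ = −x + (K(x)+u)²x² ISS. -/

import Mathlib

open Filter Set Topology


/-- If `K` is continuous with `limsup_{x→∞} |K x| √x < 1`, in particular with
`|K x| < x^{-1/2}` for all `x ≥ 4` (covering the whole journey of the trajectory
starting at `4`), then the closed-loop system `ẋ = −x + (K(x)+1)² x²`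
(constant actuator error `u ≡ 1`) has no bounded global solution from `x(0) = 4`:
such a continuous feedback `K` cannot render `ẋ = −x + (K(x)+u)² x²` ISS. -/
theorem no_bounded_solution_counterexample
    (K : ℝ → ℝ) (hK : Continuous K)
    (hlimsup : Filter.limsup (fun x => |K x| * Real.sqrt x) Filter.atTop < 1)
    (hKsmall : ∀ x : ℝ, 4 ≤ x → |K x| * Real.sqrt x < 1) :
    ¬ ∃ x : ℝ → ℝ,
        (∀ t, 0 ≤ t → HasDerivAt x (-(x t) + (K (x t) + 1) ^ 2 * (x t) ^ 2) t) ∧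
        x 0 = 4 ∧ ∃ B : ℝ, ∀ t, 0 ≤ t → |x t| ≤ B := by
  rintro ⟨x, hderiv, hx0, B, hB⟩
  set g : ℝ → ℝ := fun y => -y + (K y + 1) ^ 2 * y ^ 2 with hg
  have hgcont : Continuous g := by
    apply Continuous.add
    · exact continuous_neg
    · exact ((hK.add continuous_const).pow 2).mul (continuous_id.pow 2)
  have hgpos : ∀ y : ℝ, 4 ≤ y → 0 < g y := by
    intro y hy
    have hs2 : (2:ℝ) ≤ Real.sqrt y := by
      rw [show (2:ℝ) = Real.sqrt 4 by
        rw [show (4:ℝ) = 2^2 by norm_num, Real.sqrt_sq]; norm_num]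
      exact Real.sqrt_le_sqrt hy
    have hsq : Real.sqrt y ^ 2 = y := Real.sq_sqrt (by linarith)
    have hK1 := hKsmall y hy
    have habs : -(|K y|) ≤ K y := neg_abs_le _
    have h1 : 1 < (K y + 1) * Real.sqrt y := by nlinarith
    have h2 : 0 < (K y + 1) ^ 2 * y - 1 := by
      nlinarith [mul_pos (sub_pos.mpr h1)
        (show (0:ℝ) < (K y + 1) * Real.sqrt y + 1 by linarith)]
    show 0 < -y + (K y + 1) ^ 2 * y ^ 2
    nlinarith [mul_pos (show (0:ℝ) < y by linarith) h2]
  have hcont : ∀ t : ℝ, 0 ≤ t → ContinuousAt x t := fun t ht => (hderiv t ht).continuousAt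
  -- invariance: x t ≥ 4 for all t ≥ 0
  have hx4 : ∀ t : ℝ, 0 ≤ t → 4 ≤ x t := by
    by_contra hcon
    push_neg at hcon
    obtain ⟨t₁, ht₁0, ht₁⟩ := hcon
    have hcontOn : ContinuousOn x (Icc 0 t₁) := fun t ht => (hcont t ht.1).continuousWithinAt
    set S : Set ℝ := Icc 0 t₁ ∩ x ⁻¹' {4} with hSdef
    have hSne : S.Nonempty := ⟨0, ⟨le_rfl, ht₁0⟩, by simpa using hx0⟩
    have hSclosed : IsClosed S :=
      hcontOn.preimage_isClosed_of_isClosed isClosed_Icc isClosed_singleton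
    have hSbdd : BddAbove S := ⟨t₁, fun t ht => ht.1.2⟩
    set s := sSup S with hs
    have hsmem : s ∈ S := hSclosed.csSup_mem hSne hSbdd
    have hxs : x s = 4 := hsmem.2
    have hs0 : 0 ≤ s := hsmem.1.1
    have hst₁ : s < t₁ := lt_of_le_of_ne hsmem.1.2 (by
      intro h; rw [h] at hxs; linarith)
    have hlt : ∀ t ∈ Ioc s t₁, x t < 4 := by
      rintro t ⟨hst, htt₁⟩
      by_contra h
      push_neg at h
      obtain ⟨c, hc, hxc⟩ := intermediate_value_Icc' htt₁
        (hcontOn.mono (Icc_subset_Icc (by linarith) le_rfl)) ⟨ht₁.le, h⟩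
      have hcS : c ∈ S := ⟨⟨by linarith [hc.1], hc.2⟩, by simpa using hxc⟩
      have : c ≤ s := le_csSup hSbdd hcS
      linarith [hc.1]
    have hd := hderiv s hs0
    have hdpos : 0 < -(x s) + (K (x s) + 1) ^ 2 * (x s) ^ 2 := by
      rw [hxs]; exact hgpos 4 le_rfl
    rw [hasDerivAt_iff_tendsto_slope] at hd
    have hev : ∀ᶠ t in 𝓝[≠] s, 0 < slope x s t := hd.eventually (eventually_gt_nhds hdpos)
    have hev' : ∀ᶠ t in 𝓝[>] s, 0 < slope x s t :=
      hev.filter_mono (nhdsWithin_mono s (fun y hy => ne_of_gt hy))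
    have hmem : Ioc s t₁ ∈ 𝓝[>] s := Ioc_mem_nhdsGT hst₁
    obtain ⟨t, hslope, htmem⟩ := (hev'.and (eventually_of_mem hmem fun _ h => h)).exists
    have hts : s < t := htmem.1
    rw [slope_def_field] at hslope
    have : 0 < (x t - x s) := by
      have := mul_pos hslope (sub_pos.mpr hts)
      rw [div_mul_cancel₀] at this
      · linarith
      · exact ne_of_gt (sub_pos.mpr hts)
    have := hlt t htmem
    rw [hxs] at *
    linarith
  have hB4 : (4:ℝ) ≤ B := by
    have := hB 0 le_rfl
    rw [hx0] at this
    exact le_trans (le_abs_self _) this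
  have hxB : ∀ t : ℝ, 0 ≤ t → x t ≤ B := fun t ht => le_trans (le_abs_self _) (hB t ht)
  obtain ⟨y₀, hy₀, hmin⟩ := isCompact_Icc.exists_isMinOn (nonempty_Icc.mpr hB4)
    hgcont.continuousOn
  set c := g y₀ with hc
  have hcpos : 0 < c := hgpos y₀ hy₀.1
  set h : ℝ → ℝ := fun t => x t - c * t with hhdef
  have hhd : ∀ t : ℝ, 0 ≤ t → HasDerivAt h (g (x t) - c) t := by
    intro t ht
    have h1 : HasDerivAt (fun t : ℝ => c * t) (c * 1) t := (hasDerivAt_id t).const_mul c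
    have := (hderiv t ht).sub h1
    simp only [mul_one] at this
    exact this
  have hmono : MonotoneOn h (Ici 0) := by
    apply monotoneOn_of_deriv_nonneg (convex_Ici 0)
    · exact fun t ht => (hhd t ht).continuousAt.continuousWithinAt
    · intro t ht
      rw [interior_Ici] at ht
      exact ((hhd t (le_of_lt ht)).differentiableAt).differentiableWithinAt
    · intro t ht
      rw [interior_Ici] at ht
      rw [(hhd t (le_of_lt ht)).deriv]
      have : c ≤ g (x t) := hmin ⟨hx4 t ht.le, hxB t ht.le⟩
      linarith
  set T : ℝ := (B - 3) / c with hT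
  have hT0 : 0 ≤ T := div_nonneg (by linarith) hcpos.le
  have hcT : c * T = B - 3 := by
    rw [hT, mul_div_cancel₀ _ (ne_of_gt hcpos)]
  have := hmono (self_mem_Ici) (mem_Ici.mpr hT0) hT0
  simp only [hhdef] at this
  rw [hx0, hcT] at this
  have hxT : x T ≤ B := hxB T hT0
  linarith
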